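/- Suppose each player's constraint data in G^MBQP satisfies the Key Property (KP). If ((x_i*, X_i*))_{i∈I} is a pure-strategy Nash equilibrium of the completely positive game G^CPP, each block Q^{(i)}_{ii} is positive semidefinite, and x*_{ik} ∈ {0,1} for every k ∈ B_i and every i ∈ I, then x* = (x_i*)_{i∈I} is a pure-strategy Nash equilibrium of G^MBQP. -/

import Mathlib

open Matrix BigOperators Finset

/-- The completely positive cone: `M = A * Aᵀ` for some entrywise nonnegative matrix `A`. -/
def IsCP {ι : Type*} [Fintype ι] (M : Matrix ι ι ℝ) : Prop :=
  ∃ (r : ℕ) (A : Matrix ι (Fin r) ℝ), (∀ i j, 0 ≤ A i j) ∧ M = A * Aᵀ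

variable {I : Type*} [Fintype I] [DecidableEq I] {n : I → ℕ} {m : I → ℕ}

/-- Concatenation of a strategy profile into one long vector. -/
def conc (s : (i : I) → Fin (n i) → ℝ) : ((i : I) × Fin (n i)) → ℝ := fun p => s p.1 p.2

/-- Feasibility for player `i`'s problem `P_i^MBQP` (the constraints do not involve
the other players). -/
def MBQPFeas (a : (i : I) → Fin (m i) → Fin (n i) → ℝ) (b : (i : I) → Fin (m i) → ℝ)
    (B : (i : I) → Set (Fin (n i))) (i : I) (y : Fin (n i) → ℝ) : Prop :=
  (∀ j, a i j ⬝ᵥ y = b i j) ∧ (∀ k ∈ B i, y k = 0 ∨ y k = 1) ∧ (∀ k, 0 ≤ y k)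

/-- Player `i`'s payoff `f_i(x) = xᵀQ^{(i)}x + 2c^{(i)ᵀ}x` on the full profile. -/
def payoff (Q : (i : I) → Matrix ((i : I) × Fin (n i)) ((i : I) × Fin (n i)) ℝ)
    (c : (i : I) → ((i : I) × Fin (n i)) → ℝ) (i : I)
    (s : (i : I) → Fin (n i) → ℝ) : ℝ :=
  conc s ⬝ᵥ (Q i *ᵥ conc s) + 2 * (c i ⬝ᵥ conc s)

/-- Pure-strategy Nash equilibrium of the mixed-binary quadratic game `G^MBQP`. -/
def MBQP_PNE (a : (i : I) → Fin (m i) → Fin (n i) → ℝ) (b : (i : I) → Fin (m i) → ℝ)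
    (B : (i : I) → Set (Fin (n i)))
    (Q : (i : I) → Matrix ((i : I) × Fin (n i)) ((i : I) × Fin (n i)) ℝ)
    (c : (i : I) → ((i : I) × Fin (n i)) → ℝ)
    (s : (i : I) → Fin (n i) → ℝ) : Prop :=
  ∀ i : I, MBQPFeas a b B i (s i) ∧
    ∀ y : Fin (n i) → ℝ, MBQPFeas a b B i y →
      payoff Q c i s ≤ payoff Q c i (Function.update s i y)

/-- Feasibility for player `i`'s problem `P_i^CPP` in the completely positive game. -/
def CPPFeas (a : (i : I) → Fin (m i) → Fin (n i) → ℝ) (b : (i : I) → Fin (m i) → ℝ)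
    (B : (i : I) → Set (Fin (n i))) (α : (i : I) → Fin (n i) → ℝ) (i : I)
    (y : Fin (n i) → ℝ) (Y : Matrix (Fin (n i)) (Fin (n i)) ℝ) : Prop :=
  (∀ j, a i j ⬝ᵥ y = b i j) ∧
  (∀ j, a i j ⬝ᵥ (Y *ᵥ a i j) = (b i j) ^ 2) ∧
  (∀ k ∈ B i, y k = Y k k) ∧
  (∀ l, y l = Matrix.trace (((1 / 2 : ℝ) •
    (Matrix.vecMulVec (α i) (Pi.single l 1) + Matrix.vecMulVec (Pi.single l 1) (α i))) * Y)) ∧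
  IsCP Y

/-- Player `i`'s payoff `F_i(x_i, X_i, x_{-i})` in the completely positive game:
`Tr(Q^{(i)}_{ii}X_i) + 2x_{-i}ᵀQ^{(i)}_{-i,i}x_i + x_{-i}ᵀQ^{(i)}_{-i,-i}x_{-i} + 2c^{(i)ᵀ}x`. -/
def Fpay (Q : (i : I) → Matrix ((i : I) × Fin (n i)) ((i : I) × Fin (n i)) ℝ)
    (c : (i : I) → ((i : I) × Fin (n i)) → ℝ) (i : I)
    (s : (i : I) → Fin (n i) → ℝ) (Y : Matrix (Fin (n i)) (Fin (n i)) ℝ) : ℝ :=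
  Matrix.trace ((Matrix.of fun k l => Q i ⟨i, k⟩ ⟨i, l⟩) * Y)
  + 2 * (∑ p : (i : I) × Fin (n i), ∑ k : Fin (n i),
      if p.1 ≠ i then Q i p ⟨i, k⟩ * conc s p * s i k else 0)
  + (∑ p : (i : I) × Fin (n i), ∑ q : (i : I) × Fin (n i),
      if p.1 ≠ i ∧ q.1 ≠ i then Q i p q * conc s p * conc s q else 0)
  + 2 * (c i ⬝ᵥ conc s)

/-- Pure-strategy Nash equilibrium of the completely positive game `G^CPP`. -/
def CPP_PNE (a : (i : I) → Fin (m i) → Fin (n i) → ℝ) (b : (i : I) → Fin (m i) → ℝ)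
    (B : (i : I) → Set (Fin (n i))) (α : (i : I) → Fin (n i) → ℝ)
    (Q : (i : I) → Matrix ((i : I) × Fin (n i)) ((i : I) × Fin (n i)) ℝ)
    (c : (i : I) → ((i : I) × Fin (n i)) → ℝ)
    (s : (i : I) → Fin (n i) → ℝ)
    (XX : (i : I) → Matrix (Fin (n i)) (Fin (n i)) ℝ) : Prop :=
  ∀ i : I, CPPFeas a b B α i (s i) (XX i) ∧
    ∀ (y : Fin (n i) → ℝ) (Y : Matrix (Fin (n i)) (Fin (n i)) ℝ),
      CPPFeas a b B α i y Y →
        Fpay Q c i s (XX i) ≤ Fpay Q c i (Function.update s i y) Y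

/-- The Key Property (KP) for player `i`, with witness `α i = Σ_j y_j a_j^{(i)}`. -/
def KeyProperty (a : (i : I) → Fin (m i) → Fin (n i) → ℝ) (b : (i : I) → Fin (m i) → ℝ)
    (α : (i : I) → Fin (n i) → ℝ) : Prop :=
  ∀ i : I, ∃ y : Fin (m i) → ℝ,
    (α i = ∑ j, y j • a i j) ∧ (∀ k, 0 ≤ α i k) ∧ (∑ j, y j * b i j) = 1

section AuxLemmas
variable {N : ℕ}

lemma sum_ite_const' {β : Type*} [Fintype β] {c : Prop} [Decidable c] (g : β → ℝ) :
    ∑ q : β, (if c then g q else 0) = if c then ∑ q, g q else 0 := by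
  split <;> simp

lemma trace_half_form (α : Fin N → ℝ) (l : Fin N) (Y : Matrix (Fin N) (Fin N) ℝ) :
    Matrix.trace (((1 / 2 : ℝ) •
      (Matrix.vecMulVec α (Pi.single l 1) + Matrix.vecMulVec (Pi.single l 1) α)) * Y)
      = (1/2) * ((∑ k, α k * Y l k) + (∑ k, α k * Y k l)) := by
  simp only [Matrix.trace, Matrix.diag_apply, Matrix.mul_apply, Matrix.smul_apply,
    Matrix.add_apply, Matrix.vecMulVec_apply, smul_eq_mul, Pi.single_apply]
  have h : ∀ k j : Fin N,
      1 / 2 * (α k * (if j = l then (1:ℝ) else 0) + (if k = l then (1:ℝ) else 0) * α j) * Y j k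
      = 1/2 * ((if j = l then α k * Y j k else 0) + (if k = l then α j * Y j k else 0)) := by
    intro k j; by_cases h1 : j = l <;> by_cases h2 : k = l <;> simp [h1, h2] <;> ring
  calc ∑ k, ∑ j, 1 / 2 * (α k * (if j = l then (1:ℝ) else 0) + (if k = l then (1:ℝ) else 0) * α j) * Y j k
      = ∑ k, ∑ j, 1/2 * ((if j = l then α k * Y j k else 0) + (if k = l then α j * Y j k else 0)) := by
        exact Finset.sum_congr rfl fun k _ => Finset.sum_congr rfl fun j _ => h k j
    _ = 1/2 * ((∑ k, ∑ j, if j = l then α k * Y j k else 0)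
          + (∑ k, ∑ j, if k = l then α j * Y j k else 0)) := by
        simp only [Finset.mul_sum, mul_add, Finset.sum_add_distrib]
    _ = (1/2) * ((∑ k, α k * Y l k) + (∑ k, α k * Y k l)) := by
        congr 1
        congr 1
        · exact Finset.sum_congr rfl fun k _ => by simp
        · simp only [sum_ite_const']
          simp

lemma trace_mul_vecMulVec (M : Matrix (Fin N) (Fin N) ℝ) (y : Fin N → ℝ) :
    Matrix.trace (M * Matrix.vecMulVec y y) = y ⬝ᵥ (M *ᵥ y) := by
  simp only [Matrix.trace, Matrix.diag_apply, Matrix.mul_apply, Matrix.vecMulVec_apply,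
    dotProduct, Matrix.mulVec, Finset.mul_sum]
  exact Finset.sum_congr rfl fun k _ => Finset.sum_congr rfl fun j _ => by ring

lemma IsCP.entry_nonneg {Y : Matrix (Fin N) (Fin N) ℝ} (h : IsCP Y) (k l : Fin N) :
    0 ≤ Y k l := by
  obtain ⟨r, A, hA, rfl⟩ := h
  simp only [Matrix.mul_apply, Matrix.transpose_apply]
  exact Finset.sum_nonneg fun j _ => mul_nonneg (hA _ _) (hA _ _)

lemma IsCP.symm {Y : Matrix (Fin N) (Fin N) ℝ} (h : IsCP Y) (k l : Fin N) :
    Y k l = Y l k := by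
  obtain ⟨r, A, hA, rfl⟩ := h
  simp only [Matrix.mul_apply, Matrix.transpose_apply]
  exact Finset.sum_congr rfl fun j _ => mul_comm _ _

lemma dot_AAt {r : ℕ} (A : Matrix (Fin N) (Fin r) ℝ) (v w : Fin N → ℝ) :
    v ⬝ᵥ ((A * Aᵀ) *ᵥ w) = ∑ j, (v ᵥ* A) j * (w ᵥ* A) j := by
  rw [← Matrix.mulVec_mulVec, Matrix.dotProduct_mulVec, Matrix.mulVec_transpose]
  rfl

/-- Cauchy–Schwarz step: if `Y` is CP, `x = Y α`, and `α ⬝ x = 1`, then `(v⬝x)² ≤ vᵀYv`. -/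
lemma cp_cs {Y : Matrix (Fin N) (Fin N) ℝ} (hY : IsCP Y) (α x : Fin N → ℝ)
    (hx : ∀ l, x l = ∑ k, α k * Y l k) (hαx : α ⬝ᵥ x = 1) (v : Fin N → ℝ) :
    (v ⬝ᵥ x) ^ 2 ≤ v ⬝ᵥ (Y *ᵥ v) := by
  obtain ⟨r, A, hA, rfl⟩ := hY
  have hxv : x = (A * Aᵀ) *ᵥ α := by
    funext l
    rw [hx l, Matrix.mulVec]
    exact Finset.sum_congr rfl fun k _ => mul_comm _ _
  have h1 : v ⬝ᵥ x = ∑ j, (v ᵥ* A) j * (α ᵥ* A) j := by rw [hxv, dot_AAt]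
  have h2 : (1:ℝ) = ∑ j, (α ᵥ* A) j ^ 2 := by
    rw [← hαx, hxv, dot_AAt]
    exact Finset.sum_congr rfl fun j _ => (sq ((α ᵥ* A) j)).symm
  have h3 : v ⬝ᵥ ((A * Aᵀ) *ᵥ v) = ∑ j, (v ᵥ* A) j ^ 2 := by
    rw [dot_AAt]
    exact Finset.sum_congr rfl fun j _ => (sq ((v ᵥ* A) j)).symm
  rw [h1, h3]
  calc (∑ j, (v ᵥ* A) j * (α ᵥ* A) j) ^ 2
      ≤ (∑ j, (v ᵥ* A) j ^ 2) * (∑ j, (α ᵥ* A) j ^ 2) :=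
        Finset.sum_mul_sq_le_sq_mul_sq _ _ _
    _ = ∑ j, (v ᵥ* A) j ^ 2 := by rw [← h2, mul_one]

/-- trace inequality: `xᵀ Q x ≤ Tr(Q Y)` when `Q` PSD and `(v⬝x)² ≤ vᵀYv` for all `v`. -/
lemma trace_ge_quad {Qm Y : Matrix (Fin N) (Fin N) ℝ} (hQ : Qm.PosSemidef) (x : Fin N → ℝ)
    (hvv : ∀ v : Fin N → ℝ, (v ⬝ᵥ x) ^ 2 ≤ v ⬝ᵥ (Y *ᵥ v)) :
    x ⬝ᵥ (Qm *ᵥ x) ≤ Matrix.trace (Qm * Y) := by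
  obtain ⟨B, rfl⟩ : ∃ B : Matrix (Fin N) (Fin N) ℝ, Qm = Bᴴ * B := by
    open scoped MatrixOrder in
    obtain ⟨X, hX, -, hXX⟩ :=
      CFC.exists_sqrt_of_isSelfAdjoint_of_quasispectrumRestricts hQ.isHermitian
        (QuasispectrumRestricts.nnreal_of_nonneg (Matrix.nonneg_iff_posSemidef.mpr hQ))
    exact ⟨X, by rw [← hXX, ← Matrix.star_eq_conjTranspose, hX.star_eq]⟩
  have hB : Bᴴ = Bᵀ := by ext i j; simp [Matrix.conjTranspose_apply]
  rw [hB]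
  have hL : x ⬝ᵥ ((Bᵀ * B) *ᵥ x) = ∑ i, ((fun j => B i j) ⬝ᵥ x) ^ 2 := by
    rw [← Matrix.mulVec_mulVec, Matrix.dotProduct_mulVec, Matrix.vecMul_transpose]
    exact Finset.sum_congr rfl fun i _ => (sq _).symm
  have hR : Matrix.trace (Bᵀ * B * Y) = ∑ i, (fun j => B i j) ⬝ᵥ (Y *ᵥ fun j => B i j) := by
    rw [Matrix.mul_assoc, ← Matrix.trace_mul_comm]
    simp only [Matrix.trace, Matrix.diag_apply, Matrix.mul_apply, Matrix.transpose_apply,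
      dotProduct, Matrix.mulVec, Finset.mul_sum]
    refine Finset.sum_congr rfl fun i _ => ?_
    simp only [Finset.sum_mul]
    rw [Finset.sum_comm]
    exact Finset.sum_congr rfl fun j _ => Finset.sum_congr rfl fun k _ => by ring
  rw [hL, hR]
  exact Finset.sum_le_sum fun i _ => hvv _

end AuxLemmas
section SigmaDecomp
variable {I' : Type*} [Fintype I'] [DecidableEq I'] {n' : I' → ℕ}

lemma sum_sigma_eq (i : I) (g : ((j:I) × Fin (n j)) → ℝ) :
    ∑ p : (j:I) × Fin (n j), (if p.1 = i then g p else 0) = ∑ k, g ⟨i, k⟩ := by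
  rw [← Finset.univ_sigma_univ, Finset.sum_sigma]
  have h : ∀ a : I, (∑ b : Fin (n a), if (⟨a, b⟩ : (j : I) × Fin (n j)).1 = i then g ⟨a,b⟩ else 0)
      = if a = i then ∑ b : Fin (n a), g ⟨a,b⟩ else 0 := by
    intro a; by_cases ha : a = i <;> simp [ha]
  rw [Finset.sum_congr rfl fun a _ => h a]
  simp

lemma quad_decomp (Q : Matrix ((j:I) × Fin (n j)) ((j:I) × Fin (n j)) ℝ)
    (hsym : Q.IsSymm) (i : I) (x : ((j:I) × Fin (n j)) → ℝ) :
    x ⬝ᵥ (Q *ᵥ x) =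
      (∑ k, ∑ l, Q ⟨i,k⟩ ⟨i,l⟩ * x ⟨i,k⟩ * x ⟨i,l⟩)
      + 2 * (∑ p, ∑ k, if p.1 ≠ i then Q p ⟨i,k⟩ * x p * x ⟨i,k⟩ else 0)
      + (∑ p, ∑ q, if p.1 ≠ i ∧ q.1 ≠ i then Q p q * x p * x q else 0) := by
  have hQ : ∀ p q, Q p q = Q q p := fun p q => by
    conv_lhs => rw [← hsym]
    rfl
  have key : ∀ p q : (j:I) × Fin (n j), Q p q * x p * x q =
      (if p.1 = i then if q.1 = i then Q p q * x p * x q else 0 else 0)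
      + (if p.1 = i then if q.1 ≠ i then Q p q * x p * x q else 0 else 0)
      + (if p.1 ≠ i then if q.1 = i then Q p q * x p * x q else 0 else 0)
      + (if p.1 ≠ i ∧ q.1 ≠ i then Q p q * x p * x q else 0) := by
    intro p q
    by_cases h1 : p.1 = i <;> by_cases h2 : q.1 = i <;> simp [h1, h2]
  have hstart : x ⬝ᵥ (Q *ᵥ x) = ∑ p, ∑ q, Q p q * x p * x q := by
    simp only [dotProduct, Matrix.mulVec, Finset.mul_sum]
    exact Finset.sum_congr rfl fun p _ => Finset.sum_congr rfl fun q _ => by ring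
  rw [hstart, Finset.sum_congr rfl fun p (_ : p ∈ Finset.univ) =>
    Finset.sum_congr rfl fun q (_ : q ∈ Finset.univ) => key p q]
  simp only [Finset.sum_add_distrib]
  -- Term 1
  have t1 : (∑ p, ∑ q, if p.1 = i then if q.1 = i then Q p q * x p * x q else 0 else 0)
      = ∑ k, ∑ l, Q ⟨i,k⟩ ⟨i,l⟩ * x ⟨i,k⟩ * x ⟨i,l⟩ := by
    have := sum_sigma_eq (n := n) i (fun p => ∑ q, if q.1 = i then Q p q * x p * x q else 0)
    rw [show (∑ p, ∑ q, if p.1 = i then if q.1 = i then Q p q * x p * x q else 0 else 0)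
        = ∑ p, (if p.1 = i then ∑ q, (if q.1 = i then Q p q * x p * x q else 0) else 0) from
      Finset.sum_congr rfl fun p _ => (sum_ite_const' _), this]
    exact Finset.sum_congr rfl fun k _ => sum_sigma_eq i _
  -- Term 2 (p-block, q in i)
  have t3 : (∑ p, ∑ q, if p.1 ≠ i then if q.1 = i then Q p q * x p * x q else 0 else 0)
      = ∑ p, ∑ k, if p.1 ≠ i then Q p ⟨i,k⟩ * x p * x ⟨i,k⟩ else 0 := by
    refine Finset.sum_congr rfl fun p _ => ?_
    by_cases h : p.1 = i
    · simp [h]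
    · simp only [h, if_neg, ne_eq, not_true_eq_false, if_true, not_false_eq_true]
      exact sum_sigma_eq i _
  have t2 : (∑ p, ∑ q, if p.1 = i then if q.1 ≠ i then Q p q * x p * x q else 0 else 0)
      = ∑ p, ∑ k, if p.1 ≠ i then Q p ⟨i,k⟩ * x p * x ⟨i,k⟩ else 0 := by
    rw [← t3, Finset.sum_comm]
    refine Finset.sum_congr rfl fun p _ => Finset.sum_congr rfl fun q _ => ?_
    by_cases h1 : p.1 = i <;> by_cases h2 : q.1 = i <;> simp [h1, h2] <;> rw [hQ] <;> ring
  rw [t1, t2, t3]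
  ring

end SigmaDecomp


/-- under the Key Property, if `((x_i*, X_i*))_i` is a pure-strategy Nash
equilibrium of `G^CPP`, each `Q^{(i)}_{ii}` is positive semidefinite, and `x*_{ik}` is
binary for every `k ∈ B_i`, then `x*` is a pure-strategy Nash equilibrium of `G^MBQP`. -/
theorem cpp_pne_projects_to_mbqp_pne
    (a : (i : I) → Fin (m i) → Fin (n i) → ℝ) (b : (i : I) → Fin (m i) → ℝ)
    (B : (i : I) → Set (Fin (n i))) (α : (i : I) → Fin (n i) → ℝ)
    (Q : (i : I) → Matrix ((i : I) × Fin (n i)) ((i : I) × Fin (n i)) ℝ)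
    (c : (i : I) → ((i : I) × Fin (n i)) → ℝ)
    (hQsym : ∀ i, (Q i).IsSymm)
    (hbounded : ∀ i, Bornology.IsBounded {y : Fin (n i) → ℝ | MBQPFeas a b B i y})
    (hKP : KeyProperty a b α)
    (s : (i : I) → Fin (n i) → ℝ)
    (XX : (i : I) → Matrix (Fin (n i)) (Fin (n i)) ℝ)
    (hpne : CPP_PNE a b B α Q c s XX)
    (hpsd : ∀ i, (Matrix.of fun k l => Q i ⟨i, k⟩ ⟨i, l⟩ :
      Matrix (Fin (n i)) (Fin (n i)) ℝ).PosSemidef)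
    (hbin : ∀ i, ∀ k ∈ B i, s i k = 0 ∨ s i k = 1) :
    MBQP_PNE a b B Q c s := by
  intro i
  obtain ⟨hF, hopt⟩ := hpne i
  obtain ⟨heq, hsq, hbk, htr, hCP⟩ := hF
  obtain ⟨w, hαw, hαnn, hwb⟩ := hKP i
  have hx : ∀ l, s i l = ∑ k, α i k * XX i l k := by
    intro l
    rw [htr l, trace_half_form]
    have h2 : (∑ k, α i k * XX i k l) = ∑ k, α i k * XX i l k :=
      Finset.sum_congr rfl fun k _ => by rw [hCP.symm k l]
    rw [h2]; ring
  have hnn : ∀ k, 0 ≤ s i k := fun k => by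
    rw [hx k]
    exact Finset.sum_nonneg fun j _ => mul_nonneg (hαnn j) (hCP.entry_nonneg _ _)
  have hfeas_s : MBQPFeas a b B i (s i) := ⟨heq, hbin i, hnn⟩
  have hαdot : ∀ v : Fin (n i) → ℝ, (∀ j, a i j ⬝ᵥ v = b i j) → α i ⬝ᵥ v = 1 := by
    intro v hv
    have h1 : α i ⬝ᵥ v = ∑ j, w j * (a i j ⬝ᵥ v) := by
      rw [hαw]
      simp only [dotProduct, Finset.sum_apply, Pi.smul_apply, smul_eq_mul, Finset.sum_mul,
        Finset.mul_sum]
      rw [Finset.sum_comm]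
      exact Finset.sum_congr rfl fun j _ => Finset.sum_congr rfl fun k _ => by ring
    rw [h1]
    simp only [hv]
    exact hwb
  have hps : ∀ (t : (j : I) → Fin (n j) → ℝ),
      payoff Q c i t = (∑ k, ∑ l, Q i ⟨i,k⟩ ⟨i,l⟩ * t i k * t i l)
        + 2 * (∑ p, ∑ k, if p.1 ≠ i then Q i p ⟨i,k⟩ * conc t p * t i k else 0)
        + (∑ p, ∑ q, if p.1 ≠ i ∧ q.1 ≠ i then Q i p q * conc t p * conc t q else 0)
        + 2 * (c i ⬝ᵥ conc t) := by
    intro t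
    have hqd := quad_decomp (Q i) (hQsym i) i (conc t)
    simp only [payoff]
    rw [hqd]
    rfl
  have hdott : ∀ (u : Fin (n i) → ℝ),
      (∑ k, ∑ l, Q i ⟨i,k⟩ ⟨i,l⟩ * u k * u l)
        = u ⬝ᵥ ((Matrix.of fun k l => Q i ⟨i,k⟩ ⟨i,l⟩) *ᵥ u) := by
    intro u
    simp only [dotProduct, Matrix.mulVec, Matrix.of_apply, Finset.mul_sum]
    exact Finset.sum_congr rfl fun k _ => Finset.sum_congr rfl fun l _ => by ring
  have hFp : ∀ (t : (j : I) → Fin (n j) → ℝ) (Y : Matrix (Fin (n i)) (Fin (n i)) ℝ),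
      Fpay Q c i t Y = Matrix.trace ((Matrix.of fun k l => Q i ⟨i,k⟩ ⟨i,l⟩) * Y)
        + 2 * (∑ p, ∑ k, if p.1 ≠ i then Q i p ⟨i,k⟩ * conc t p * t i k else 0)
        + (∑ p, ∑ q, if p.1 ≠ i ∧ q.1 ≠ i then Q i p q * conc t p * conc t q else 0)
        + 2 * (c i ⬝ᵥ conc t) := fun t Y => rfl
  refine ⟨hfeas_s, ?_⟩
  intro y hy
  obtain ⟨hyeq, hybin, hynn⟩ := hy
  set Y : Matrix (Fin (n i)) (Fin (n i)) ℝ := Matrix.vecMulVec y y with hYdef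
  have hαy : α i ⬝ᵥ y = 1 := hαdot y hyeq
  have hsum1 : (∑ k, α i k * y k) = 1 := hαy
  have hYfeas : CPPFeas a b B α i y Y := by
    refine ⟨hyeq, ?_, ?_, ?_, ?_⟩
    · intro j
      have hmv : Y *ᵥ a i j = fun l => y l * (y ⬝ᵥ a i j) := by
        funext l
        simp [hYdef, Matrix.mulVec, dotProduct, Matrix.vecMulVec_apply, Finset.mul_sum,
          mul_assoc]
      rw [hmv]
      have hd : a i j ⬝ᵥ (fun l => y l * (y ⬝ᵥ a i j)) = (a i j ⬝ᵥ y) * (y ⬝ᵥ a i j) := by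
        simp only [dotProduct, Finset.sum_mul]
        exact Finset.sum_congr rfl fun l _ => by ring
      rw [hd, hyeq j, dotProduct_comm, hyeq j]
      ring
    · intro k hk
      have hkk : Y k k = y k * y k := by rw [hYdef, Matrix.vecMulVec_apply]
      rw [hkk]
      rcases hybin k hk with h | h <;> rw [h] <;> ring
    · intro l
      rw [trace_half_form]
      have e1 : (∑ k, α i k * Y l k) = y l := by
        simp only [hYdef, Matrix.vecMulVec_apply]
        calc (∑ k, α i k * (y l * y k)) = y l * ∑ k, α i k * y k := by
              rw [Finset.mul_sum]
              exact Finset.sum_congr rfl fun k _ => by ring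
          _ = y l := by rw [hsum1, mul_one]
      have e2 : (∑ k, α i k * Y k l) = y l := by
        simp only [hYdef, Matrix.vecMulVec_apply]
        calc (∑ k, α i k * (y k * y l)) = y l * ∑ k, α i k * y k := by
              rw [Finset.mul_sum]
              exact Finset.sum_congr rfl fun k _ => by ring
          _ = y l := by rw [hsum1, mul_one]
      rw [e1, e2]
      ring
    · exact ⟨1, Matrix.of (fun k (_ : Fin 1) => y k), fun k j => hynn k,
        by ext k l; simp [hYdef, Matrix.mul_apply, Matrix.vecMulVec_apply]⟩
  have hkey := hopt y Y hYfeas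
  have h1 : payoff Q c i s ≤ Fpay Q c i s (XX i) := by
    rw [hps s, hFp s (XX i)]
    have htg := trace_ge_quad (hpsd i) (s i)
      (fun v => cp_cs hCP (α i) (s i) hx (hαdot (s i) heq) v)
    have hT : (∑ k, ∑ l, Q i ⟨i,k⟩ ⟨i,l⟩ * s i k * s i l)
        ≤ Matrix.trace ((Matrix.of fun k l => Q i ⟨i,k⟩ ⟨i,l⟩) * XX i) := by
      rw [hdott (s i)]
      exact htg
    exact add_le_add_left (add_le_add_left (add_le_add_left hT _) _) _
  have h3 : Fpay Q c i (Function.update s i y) Y = payoff Q c i (Function.update s i y) := by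
    rw [hps, hFp]
    simp only [Function.update_self]
    have e : Matrix.trace ((Matrix.of fun k l => Q i ⟨i,k⟩ ⟨i,l⟩) * Y)
        = ∑ k, ∑ l, Q i ⟨i,k⟩ ⟨i,l⟩ * y k * y l := by
      rw [hYdef, trace_mul_vecMulVec, hdott y]
    rw [e]
  calc payoff Q c i s ≤ Fpay Q c i s (XX i) := h1
    _ ≤ Fpay Q c i (Function.update s i y) Y := hkey
    _ = payoff Q c i (Function.update s i y) := h3
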